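/- Let A be a vector space over a field k of characteristic 0 equipped with a bilinear operation ∘, and let A[t,t⁻¹] := A ⊗ k[t,t⁻¹] carry the bilinear bracket determined by [a⊗tⁱ, b⊗tʲ] = i(a∘b)⊗t^{i+j−1} − j(b∘a)⊗t^{i+j−1} for all a,b ∈ A and i,j ∈ ℤ. Then (A[t,t⁻¹], [·,·]) is a Lie algebra if and only if (A,∘) is a Novikov algebra. -/

import Mathlib

open TensorProduct

noncomputable section

variable {k : Type*} [Field k]
section AlgDefs
variable {A : Type*} [AddCommGroup A] [Module k A]

/-- A pre-Lie algebra structure: `(a∘b)∘c − a∘(b∘c) = (b∘a)∘c − b∘(a∘c)`. -/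
def IsPreLie (op : A →ₗ[k] A →ₗ[k] A) : Prop :=
  ∀ a b c : A, op (op a b) c - op a (op b c) = op (op b a) c - op b (op a c)

/-- A Novikov algebra: a pre-Lie algebra with `(a∘b)∘c = (a∘c)∘b`. -/
def IsNovikov (op : A →ₗ[k] A →ₗ[k] A) : Prop :=
  IsPreLie op ∧ ∀ a b c : A, op (op a b) c = op (op a c) b

/-- A pre-Novikov algebra with operations `l = ◁` and `r = ▷`,
writing `a∘b := a◁b + a▷b`. -/
def IsPreNovikov (l r : A →ₗ[k] A →ₗ[k] A) : Prop :=
  (∀ a b c : A, r a (r b c) = r (l a b + r a b) c + r b (r a c) - r (l b a + r b a) c) ∧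
  (∀ a b c : A, r a (l b c) = l (r a b) c + l b (l a c + r a c) - l (l b a) c) ∧
  (∀ a b c : A, r (l a b + r a b) c = l (r a c) b) ∧
  (∀ a b c : A, l (l a b) c = l (l a c) b)

/-- A right Novikov algebra. -/
def IsRightNovikov (d : A →ₗ[k] A →ₗ[k] A) : Prop :=
  (∀ x y z : A, d (d x y) z - d x (d y z) = d (d x z) y - d x (d z y)) ∧
  (∀ x y z : A, d x (d y z) = d y (d x z))

/-- A right Novikov dialgebra with operations `dl = ⊣` and `dr = ⊢`. -/
def IsRightNovikovDialgebra (dl dr : A →ₗ[k] A →ₗ[k] A) : Prop :=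
  (∀ x y z : A, dr x (dr y z) = dr y (dr x z)) ∧
  (∀ x y z : A, dr x (dl y z) = dl y (dl x z)) ∧
  (∀ x y z : A, dr (dr x y - dl x y) z = 0) ∧
  (∀ x y z : A, dl x (dr y z - dl y z) = 0) ∧
  (∀ x y z : A, dr x (dr y z - dl z y) = dr (dr x y) z - dl (dr x z) y) ∧
  (∀ x y z : A, dl x (dr y z - dl z y) = dl (dl x y) z - dl (dl x z) y)

/-- A quadratic right Novikov algebra: a right Novikov algebra with a symmetric
nondegenerate bilinear form satisfying `(x⋄y,z) = −(x, y⋄z + z⋄y)`. -/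
def IsQuadraticRightNovikov (d : A →ₗ[k] A →ₗ[k] A) (bf : A →ₗ[k] A →ₗ[k] k) : Prop :=
  IsRightNovikov d ∧ (∀ x y : A, bf x y = bf y x) ∧
  (∀ x : A, (∀ y : A, bf x y = 0) → x = 0) ∧
  (∀ x y z : A, bf (d x y) z = - bf x (d y z + d z y))

/-- A quadratic pre-Lie algebra: a pre-Lie algebra with a skew-symmetric nondegenerate
bilinear form satisfying `ω(u∘v,w) = −ω(v, u∘w − w∘u)`. -/
def IsQuadraticPreLie (op : A →ₗ[k] A →ₗ[k] A) (w : A →ₗ[k] A →ₗ[k] k) : Prop :=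
  IsPreLie op ∧ (∀ u v : A, w u v = - w v u) ∧
  (∀ u : A, (∀ v : A, w u v = 0) → u = 0) ∧
  (∀ u v x : A, w (op u v) x = - w v (op u x - op x u))

end AlgDefs

namespace NovAux

variable {k : Type*} [Field k] {A : Type*} [AddCommGroup A] [Module k A]

open LaurentPolynomial

/-- The coefficient-extraction functional on Laurent polynomials. -/
def coeffL (n : ℤ) : LaurentPolynomial k →ₗ[k] k :=
  Finsupp.lapply n ∘ₗ (AddMonoidAlgebra.coeffLinearEquiv k).toLinearMap

/-- Extraction of the coefficient of `T n` from `A ⊗ k[t,t⁻¹]`. -/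
def extr (n : ℤ) : A ⊗[k] LaurentPolynomial k →ₗ[k] A :=
  (TensorProduct.rid k A).toLinearMap ∘ₗ LinearMap.lTensor A (coeffL n)

lemma extr_tmul (a : A) (n m : ℤ) :
    extr n (a ⊗ₜ[k] (T m : LaurentPolynomial k)) = if m = n then a else 0 := by
  rw [extr, LinearMap.comp_apply, LinearMap.lTensor_tmul]
  have : coeffL (k := k) n (T m) = if m = n then 1 else 0 := by
    show (Finsupp.single m 1 : ℤ →₀ k) n = _
    rw [Finsupp.single_apply]
  rw [this]; split <;> simp

lemma extr_tmul_one (a : A) : extr 0 (a ⊗ₜ[k] (1 : LaurentPolynomial k)) = a := by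
  rw [← LaurentPolynomial.T_zero, extr_tmul]; simp

/-- Induction principle: `A ⊗ k[t,t⁻¹]` is generated by the `a ⊗ₜ T i`. -/
lemma tensor_ind {P : A ⊗[k] LaurentPolynomial k → Prop}
    (h0 : P 0) (hadd : ∀ x y, P x → P y → P (x + y))
    (hsmul : ∀ (c : k) x, P x → P (c • x))
    (hT : ∀ (a : A) (i : ℤ), P (a ⊗ₜ[k] (T i : LaurentPolynomial k)))
    (x : A ⊗[k] LaurentPolynomial k) : P x := by
  induction x using TensorProduct.induction_on with
  | zero => exact h0
  | tmul a p =>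
    induction p using AddMonoidAlgebra.induction_linear with
    | zero => simpa using h0
    | add p q hp hq => rw [TensorProduct.tmul_add]; exact hadd _ _ hp hq
    | single n r =>
      have : a ⊗ₜ[k] (AddMonoidAlgebra.single n r : LaurentPolynomial k)
          = r • (a ⊗ₜ[k] (T n : LaurentPolynomial k)) := by
        rw [LaurentPolynomial.T, ← TensorProduct.tmul_smul, AddMonoidAlgebra.smul_single', mul_one]
      rw [this]; exact hsmul _ _ (hT a n)
  | add x y hx hy => exact hadd _ _ hx hy

/-- The key linear-algebra identity in a Novikov algebra. -/
lemma key (mul : A →ₗ[k] A →ₗ[k] A) (hN : IsNovikov mul) (a b c : A) (I J L : k) :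
    (I*(I+J-1)) • mul (mul a b) c - (I*L) • mul c (mul a b)
    - (J*(I+J-1)) • mul (mul b a) c + (J*L) • mul c (mul b a)
    + (J*(J+L-1)) • mul (mul b c) a - (J*I) • mul a (mul b c)
    - (L*(J+L-1)) • mul (mul c b) a + (L*I) • mul a (mul c b)
    + (L*(L+I-1)) • mul (mul c a) b - (L*J) • mul b (mul c a)
    - (I*(L+I-1)) • mul (mul a c) b + (I*J) • mul b (mul a c) = 0 := by
  linear_combination (norm := module) (I*(I-1)) • hN.2 a b c + (J*(1-J)) • hN.2 b a c
    + (L*(1-L)) • hN.2 c b a + (I*J) • hN.1 a b c + (J*L) • hN.1 b c a - (I*L) • hN.1 a c b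

section Bracket

variable (mul : A →ₗ[k] A →ₗ[k] A)
  (br : A ⊗[k] LaurentPolynomial k →ₗ[k]
    A ⊗[k] LaurentPolynomial k →ₗ[k] A ⊗[k] LaurentPolynomial k)
  (hbr : ∀ (a b : A) (i j : ℤ),
    br (a ⊗ₜ[k] (T i : LaurentPolynomial k)) (b ⊗ₜ[k] (T j : LaurentPolynomial k))
      = i • (mul a b ⊗ₜ[k] (T (i + j - 1) : LaurentPolynomial k))
        - j • (mul b a ⊗ₜ[k] (T (i + j - 1) : LaurentPolynomial k)))

include hbr in
lemma hbr' (a b : A) (i j : ℤ) :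
    br (a ⊗ₜ[k] (T i : LaurentPolynomial k)) (b ⊗ₜ[k] (T j : LaurentPolynomial k))
      = ((i : k) • mul a b - (j : k) • mul b a) ⊗ₜ[k] (T (i+j-1) : LaurentPolynomial k) := by
  rw [hbr, TensorProduct.sub_tmul, TensorProduct.smul_tmul', TensorProduct.smul_tmul',
    Int.cast_smul_eq_zsmul, Int.cast_smul_eq_zsmul]

include hbr in
lemma antisym : ∀ x y, br x y + br y x = 0 := by
  intro x
  induction x using tensor_ind with
  | h0 => simp
  | hadd u v hu hv =>
    intro y
    simp only [map_add, LinearMap.add_apply]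
    linear_combination (norm := abel) hu y + hv y
  | hsmul c u hu =>
    intro y
    simp only [map_smul, LinearMap.smul_apply]
    rw [← smul_add, hu y, smul_zero]
  | hT a i =>
    intro y
    induction y using tensor_ind with
    | h0 => simp
    | hadd u v hu hv =>
      simp only [map_add, LinearMap.add_apply]
      linear_combination (norm := abel) hu + hv
    | hsmul c u hu =>
      simp only [map_smul, LinearMap.smul_apply]
      rw [← smul_add, hu, smul_zero]
    | hT b j =>
      have e : j + i - 1 = i + j - 1 := by ring
      rw [hbr, hbr, e]
      abel

include hbr in
lemma genJacobi [CharZero k] (hN : IsNovikov mul) (a b c : A) (i j l : ℤ) :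
    br (br (a ⊗ₜ[k] (T i : LaurentPolynomial k)) (b ⊗ₜ[k] (T j : LaurentPolynomial k)))
        (c ⊗ₜ[k] (T l : LaurentPolynomial k))
      + br (br (b ⊗ₜ[k] (T j : LaurentPolynomial k)) (c ⊗ₜ[k] (T l : LaurentPolynomial k)))
        (a ⊗ₜ[k] (T i : LaurentPolynomial k))
      + br (br (c ⊗ₜ[k] (T l : LaurentPolynomial k)) (a ⊗ₜ[k] (T i : LaurentPolynomial k)))
        (b ⊗ₜ[k] (T j : LaurentPolynomial k)) = 0 := by
  have e1 : i + j - 1 + l - 1 = i + j + l - 2 := by ring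
  have e2 : j + l - 1 + i - 1 = i + j + l - 2 := by ring
  have e3 : l + i - 1 + j - 1 = i + j + l - 2 := by ring
  have hW := key mul hN a b c (i : k) (j : k) (l : k)
  have hW' := congrArg (fun w => w ⊗ₜ[k] (T (i+j+l-2) : LaurentPolynomial k)) hW
  simp only [TensorProduct.sub_tmul, TensorProduct.add_tmul, ← TensorProduct.smul_tmul',
    TensorProduct.zero_tmul] at hW'
  simp only [hbr' mul br hbr, TensorProduct.sub_tmul, ← TensorProduct.smul_tmul',
    map_sub, map_smul, LinearMap.sub_apply, LinearMap.smul_apply, e1, e2, e3]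
  push_cast at hW' ⊢
  linear_combination (norm := module) hW'

include hbr in
lemma jacobi [CharZero k] (hN : IsNovikov mul) :
    ∀ x y z, br (br x y) z + br (br y z) x + br (br z x) y = 0 := by
  intro x
  induction x using tensor_ind with
  | h0 => intro y z; simp
  | hadd u v hu hv =>
    intro y z
    simp only [map_add, LinearMap.add_apply]
    linear_combination (norm := abel) hu y z + hv y z
  | hsmul c u hu =>
    intro y z
    simp only [map_smul, LinearMap.smul_apply]
    rw [← smul_add, ← smul_add, hu y z, smul_zero]
  | hT a i =>
    intro y
    induction y using tensor_ind with
    | h0 => intro z; simp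
    | hadd u v hu hv =>
      intro z
      simp only [map_add, LinearMap.add_apply]
      linear_combination (norm := abel) hu z + hv z
    | hsmul c u hu =>
      intro z
      simp only [map_smul, LinearMap.smul_apply]
      rw [← smul_add, ← smul_add, hu z, smul_zero]
    | hT b j =>
      intro z
      induction z using tensor_ind with
      | h0 => simp
      | hadd u v hu hv =>
        simp only [map_add, LinearMap.add_apply]
        linear_combination (norm := abel) hu + hv
      | hsmul c u hu =>
        simp only [map_smul, LinearMap.smul_apply]
        rw [← smul_add, ← smul_add, hu, smul_zero]
      | hT c l => exact genJacobi mul br hbr hN a b c i j l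

end Bracket

end NovAux

/-- The bracket `[a⊗tⁱ, b⊗tʲ] = i(a∘b)⊗t^{i+j−1} − j(b∘a)⊗t^{i+j−1}`
on `A ⊗ k[t,t⁻¹]` defines a Lie algebra if and only if `(A, ∘)` is a Novikov algebra. -/
theorem affinization_lie_iff_novikov (k A : Type*) [Field k] [CharZero k]
    [AddCommGroup A] [Module k A]
    (mul : A →ₗ[k] A →ₗ[k] A)
    (br : A ⊗[k] LaurentPolynomial k →ₗ[k]
      A ⊗[k] LaurentPolynomial k →ₗ[k] A ⊗[k] LaurentPolynomial k)
    (hbr : ∀ (a b : A) (i j : ℤ),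
      br (a ⊗ₜ[k] (LaurentPolynomial.T i : LaurentPolynomial k))
          (b ⊗ₜ[k] (LaurentPolynomial.T j : LaurentPolynomial k))
        = i • (mul a b ⊗ₜ[k] (LaurentPolynomial.T (i + j - 1) : LaurentPolynomial k))
          - j • (mul b a ⊗ₜ[k] (LaurentPolynomial.T (i + j - 1) : LaurentPolynomial k))) :
    ((∀ x, br x x = 0) ∧
        ∀ x y z, br (br x y) z + br (br y z) x + br (br z x) y = 0)
      ↔ IsNovikov mul := by
  open LaurentPolynomial NovAux in
  constructor
  · rintro ⟨-, hJ⟩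
    constructor
    · -- pre-Lie, from exponents (1,1,0)
      intro a b c
      have H := hJ (a ⊗ₜ[k] (T 1 : LaurentPolynomial k)) (b ⊗ₜ[k] (T 1 : LaurentPolynomial k))
        (c ⊗ₜ[k] (T 0 : LaurentPolynomial k))
      simp only [hbr' mul br hbr, TensorProduct.sub_tmul, ← TensorProduct.smul_tmul',
        map_sub, map_smul, LinearMap.sub_apply, LinearMap.smul_apply] at H
      norm_num at H
      have H2 := congrArg (extr 0) H
      simp only [map_sub, map_add, map_smul, map_zero, map_neg, extr_tmul_one] at H2
      linear_combination (norm := module) H2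
    · -- Novikov symmetry, from exponents (2,0,0)
      intro a b c
      have H := hJ (a ⊗ₜ[k] (T 2 : LaurentPolynomial k)) (b ⊗ₜ[k] (T 0 : LaurentPolynomial k))
        (c ⊗ₜ[k] (T 0 : LaurentPolynomial k))
      simp only [hbr' mul br hbr, TensorProduct.sub_tmul, ← TensorProduct.smul_tmul',
        map_sub, map_smul, LinearMap.sub_apply, LinearMap.smul_apply] at H
      norm_num at H
      have H2 := congrArg (extr 0) H
      simp only [map_sub, map_add, map_smul, map_zero, map_neg, extr_tmul_one] at H2
      have H3 : (2:k) • (mul (mul a b) c - mul (mul a c) b) = 0 := by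
        linear_combination (norm := module) H2
      rcases smul_eq_zero.mp H3 with h | h
      · exact absurd h two_ne_zero
      · linear_combination (norm := module) h
  · intro hN
    refine ⟨fun x => ?_, jacobi mul br hbr hN⟩
    have h := antisym mul br hbr x x
    rw [← two_smul k] at h
    rcases smul_eq_zero.mp h with h' | h'
    · exact absurd h' two_ne_zero
    · exact h'
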